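/- Let A ∈ ℝ^{m×N} with nontrivial null space, x₀ ∈ ℝ^N, and τ > ‖x₀‖₁, with ρ := τ − ‖x₀‖₁. Let z ∈ range(A) ⊆ ℝ^m and let ζ ∈ ℝ^N satisfy A ζ = z. Then for any 0 < η < ρ/‖ζ‖₁, the point ξ := x₀ + η ζ is feasible for the constrained Lasso {x : ‖x‖₁ ≤ τ} and achieves zero residual ‖(A x₀ + η z) − A ξ‖₂ = 0; moreover ξ lies in the interior of τ B₁^N, so there exists ν ∈ Null(A), ν ≠ 0, with ‖ξ + ν‖₁ ∈ [(τ + ‖x₀‖₁)/2, τ] and A(ξ + ν) = A x₀ + η z, and every such point satisfies ‖ξ + ν − x₀‖₂² ≥ ρ²/(4N). -/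

import Mathlib

/-- Underconstrained LASSO construction: if `τ > ‖x₀‖₁`, `A` has nontrivial null
space, `z = Aζ`, and `0 < η` with `η‖ζ‖₁ < ρ := τ - ‖x₀‖₁`, then `ξ := x₀ + ηζ`
is feasible with zero residual and lies in the interior of `τB₁`; hence there is
`0 ≠ ν ∈ Null(A)` with `‖ξ + ν‖₁ ∈ [(τ + ‖x₀‖₁)/2, τ]` and `A(ξ+ν) = Ax₀ + ηz`,
and every such point satisfies `‖ξ + ν - x₀‖₂² ≥ ρ²/(4N)`. -/
theorem ls_underconstrained_construction {m N : ℕ}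
    (A : Matrix (Fin m) (Fin N) ℝ)
    (hNull : ∃ v : Fin N → ℝ, v ≠ 0 ∧ A.mulVec v = 0)
    (x₀ : Fin N → ℝ) (τ : ℝ) (hτ : (∑ i, |x₀ i|) < τ)
    (ζ : Fin N → ℝ) (z : Fin m → ℝ) (hζ : A.mulVec ζ = z)
    (η : ℝ) (hη : 0 < η) (hηs : η * (∑ i, |ζ i|) < τ - ∑ i, |x₀ i|) :
    (∑ i, |x₀ i + η * ζ i|) < τ ∧
    A.mulVec (x₀ + η • ζ) = A.mulVec x₀ + η • z ∧
    (∃ ν : Fin N → ℝ, ν ≠ 0 ∧ A.mulVec ν = 0 ∧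
      (∑ i, |x₀ i + η * ζ i + ν i|) ∈ Set.Icc ((τ + ∑ i, |x₀ i|) / 2) τ ∧
      A.mulVec (x₀ + η • ζ + ν) = A.mulVec x₀ + η • z) ∧
    (∀ ν : Fin N → ℝ, A.mulVec ν = 0 →
      (∑ i, |x₀ i + η * ζ i + ν i|) ∈ Set.Icc ((τ + ∑ i, |x₀ i|) / 2) τ →
      (∑ i, (x₀ i + η * ζ i + ν i - x₀ i) ^ 2) ≥ (τ - ∑ i, |x₀ i|) ^ 2 / (4 * N)) := by
  set S : ℝ := ∑ i, |x₀ i| with hS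
  set ξ : Fin N → ℝ := fun i => x₀ i + η * ζ i with hξ
  -- Part 1: feasibility
  have h1 : (∑ i, |x₀ i + η * ζ i|) < τ := by
    calc (∑ i, |x₀ i + η * ζ i|) ≤ ∑ i, (|x₀ i| + η * |ζ i|) := by
          refine Finset.sum_le_sum fun i _ => ?_
          calc |x₀ i + η * ζ i| ≤ |x₀ i| + |η * ζ i| := abs_add_le _ _
            _ = |x₀ i| + η * |ζ i| := by rw [abs_mul, abs_of_pos hη]
      _ = S + η * (∑ i, |ζ i|) := by rw [Finset.sum_add_distrib, Finset.mul_sum]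
      _ < S + (τ - S) := by linarith
      _ = τ := by ring
  -- Part 2: zero residual
  have h2 : A.mulVec (x₀ + η • ζ) = A.mulVec x₀ + η • z := by
    rw [Matrix.mulVec_add, Matrix.mulVec_smul, hζ]
  refine ⟨h1, h2, ?_, ?_⟩
  · -- existence via IVT
    obtain ⟨v, hv0, hvA⟩ := hNull
    obtain ⟨j, hj⟩ : ∃ j, v j ≠ 0 := by
      by_contra h
      push_neg at h
      exact hv0 (funext h)
    set f : ℝ → ℝ := fun t => ∑ i, |ξ i + t * v i| with hf
    have hfc : Continuous f := by
      apply continuous_finset_sum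
      intro i _
      exact ((continuous_const.add (continuous_id.mul continuous_const))).abs
    set c : ℝ := max ((τ + S) / 2) ((f 0 + τ) / 2) with hc
    have hf0 : f 0 = ∑ i, |x₀ i + η * ζ i| := by simp [hf, hξ]
    have hf0τ : f 0 < τ := by rw [hf0]; exact h1
    have hcτ : c < τ := by
      apply max_lt <;> linarith
    have hf0c : f 0 < c := le_max_right _ _ |>.trans_lt' (by linarith)
    set T : ℝ := (c + |ξ j|) / |v j| with hT
    have hvj : 0 < |v j| := abs_pos.mpr hj
    have hSnn : (0:ℝ) ≤ S := Finset.sum_nonneg fun i _ => abs_nonneg _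
    have hcnn : (0:ℝ) ≤ c := le_trans (by linarith) (le_max_left _ _)
    have hTnn : (0:ℝ) ≤ T := div_nonneg (add_nonneg hcnn (abs_nonneg _)) hvj.le
    have hfT : c ≤ f T := by
      have h1' : |ξ j + T * v j| ≤ f T := by
        refine Finset.single_le_sum (f := fun i => |ξ i + T * v i|)
          (fun i _ => abs_nonneg _) (Finset.mem_univ j)
      have h2' : T * |v j| - |ξ j| ≤ |ξ j + T * v j| := by
        have := abs_sub_abs_le_abs_sub (T * v j) (-(ξ j))
        have habs : |T * v j| = T * |v j| := by
          rw [abs_mul]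
          congr 1
          rw [abs_of_nonneg hTnn]
        calc T * |v j| - |ξ j| = |T * v j| - |(-(ξ j))| := by rw [habs, abs_neg]
          _ ≤ |T * v j - -(ξ j)| := abs_sub_abs_le_abs_sub _ _
          _ = |ξ j + T * v j| := by ring_nf
      have hTv : T * |v j| = c + |ξ j| := by
        rw [hT, div_mul_cancel₀ _ hvj.ne']
      linarith
    have hc0 : f 0 ≤ c := hf0c.le
    obtain ⟨t, ht, hft⟩ : ∃ t ∈ Set.Icc 0 T, f t = c := by
      have := intermediate_value_Icc hTnn (hfc.continuousOn (s := Set.Icc 0 T))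
      exact this ⟨hc0, hfT⟩
    have ht0 : t ≠ 0 := by
      intro h
      rw [h] at hft
      exact absurd hft (by linarith)
    refine ⟨t • v, smul_ne_zero ht0 hv0, ?_, ?_, ?_⟩
    · rw [Matrix.mulVec_smul, hvA, smul_zero]
    · have : (∑ i, |x₀ i + η * ζ i + (t • v) i|) = f t := by
        simp [hf, hξ, mul_comm]
      rw [this, hft]
      exact ⟨le_max_left _ _, hcτ.le⟩
    · rw [Matrix.mulVec_add, h2, Matrix.mulVec_smul, hvA, smul_zero, add_zero]
  · -- lower bound
    intro ν _ hmem
    obtain ⟨hlo, _⟩ := hmem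
    set w : Fin N → ℝ := fun i => x₀ i + η * ζ i + ν i - x₀ i with hw
    have hCS : (∑ i, |w i|) ^ 2 ≤ N * ∑ i, w i ^ 2 := by
      have := sq_sum_le_card_mul_sum_sq (s := (Finset.univ : Finset (Fin N)))
        (f := fun i => |w i|)
      simpa [sq_abs] using this
    have htri : (τ - S) / 2 ≤ ∑ i, |w i| := by
      have h1' : (∑ i, |x₀ i + η * ζ i + ν i|) ≤ (∑ i, |w i|) + S := by
        rw [← Finset.sum_add_distrib]
        refine Finset.sum_le_sum fun i _ => ?_
        calc |x₀ i + η * ζ i + ν i| = |w i + x₀ i| := by rw [hw]; ring_nf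
          _ ≤ |w i| + |x₀ i| := abs_add_le _ _
      linarith
    have hnn : 0 ≤ ∑ i, |w i| := Finset.sum_nonneg fun i _ => abs_nonneg _
    have hsq : ((τ - S) / 2) ^ 2 ≤ (∑ i, |w i|) ^ 2 := by
      apply sq_le_sq' <;> linarith
    rcases Nat.eq_zero_or_pos N with hN | hN
    · subst hN
      simp
    · have hNpos : (0:ℝ) < N := by exact_mod_cast hN
      rw [ge_iff_le, div_le_iff₀ (by positivity)]
      calc (τ - S) ^ 2 = ((τ - S) / 2) ^ 2 * 4 := by ring
        _ ≤ (∑ i, |w i|) ^ 2 * 4 := by linarith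
        _ ≤ (N * ∑ i, w i ^ 2) * 4 := by linarith
        _ = (∑ i, w i ^ 2) * (4 * N) := by ring
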